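/- The group G_{l,m} = GL(l,ℝ) × (Sp(1)·GL(m,ℍ)) is isomorphic to the group of quaternionic linear isomorphisms of ℍ^{l+m} that preserve both the real subspace ℝ^l and the subspace (Im ℍ)^l × ℍ^m. -/

import Mathlib

noncomputable section

open scoped Quaternion

/-- The group `Sp(1)` of unit quaternions, as a subgroup of `ℍˣ`. -/
def Sp1 : Subgroup ℍ[ℝ]ˣ where
  carrier := {a | ‖(a : ℍ[ℝ])‖ = 1}
  one_mem' := by simp
  mul_mem' := by
    intro a b ha hb
    simp only [Set.mem_setOf_eq, Units.val_mul, norm_mul] at *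
    rw [ha, hb, mul_one]
  inv_mem' := by
    intro a ha
    simp only [Set.mem_setOf_eq] at *
    rw [Units.val_inv_eq_inv_val, norm_inv, ha, inv_one]

/-- `GL(I, ℍ)`, the group of invertible quaternionic `I × I` matrices. -/
abbrev GLH (I : Type) [Fintype I] [DecidableEq I] := (Matrix I I ℍ[ℝ])ˣ

/-- The action of `Sp(1) × GL(I,ℍ)` on `ℍ^I` by `(±(a,A), q) ↦ a q A⁻¹`. -/
def qAct {I : Type} [Fintype I] [DecidableEq I]
    (g : Sp1 × GLH I) (v : I → ℍ[ℝ]) : I → ℍ[ℝ] :=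
  fun i => g.1.val.val * Matrix.vecMul v (g.2⁻¹).val i

lemma qAct_one {I : Type} [Fintype I] [DecidableEq I] (v : I → ℍ[ℝ]) :
    qAct (1 : Sp1 × GLH I) v = v := by
  funext i
  simp [qAct, Matrix.vecMul_one]

lemma qAct_mul {I : Type} [Fintype I] [DecidableEq I]
    (g h : Sp1 × GLH I) (v : I → ℍ[ℝ]) :
    qAct (g * h) v = qAct g (qAct h v) := by
  funext i
  simp only [qAct, Prod.fst_mul, Prod.snd_mul, mul_inv_rev, Units.val_mul,
    Subgroup.coe_mul, Matrix.vecMul, dotProduct, Matrix.mul_apply,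
    Finset.mul_sum, Finset.sum_mul, mul_assoc]
  rw [Finset.sum_comm]

/-- The subgroup of `Sp(1) × GL(I,ℍ)` preserving two given subsets of `ℍ^I`. -/
def stab {I : Type} [Fintype I] [DecidableEq I] (S₁ S₂ : Set (I → ℍ[ℝ])) :
    Subgroup (Sp1 × GLH I) where
  carrier := {g | qAct g '' S₁ = S₁ ∧ qAct g '' S₂ = S₂}
  one_mem' := by
    have h : ∀ S : Set (I → ℍ[ℝ]), qAct (1 : Sp1 × GLH I) '' S = S := fun S => by
      rw [show qAct (1 : Sp1 × GLH I) = id from funext qAct_one, Set.image_id]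
    exact ⟨h S₁, h S₂⟩
  mul_mem' := by
    intro a b ha hb
    have key : ∀ S : Set (I → ℍ[ℝ]), qAct b '' S = S → qAct a '' S = S →
        qAct (a * b) '' S = S := fun S h1 h2 => by
      rw [show qAct (a * b) = qAct a ∘ qAct b from funext (qAct_mul a b),
        Set.image_comp, h1, h2]
    exact ⟨key _ hb.1 ha.1, key _ hb.2 ha.2⟩
  inv_mem' := by
    intro a ha
    have key : ∀ S : Set (I → ℍ[ℝ]), qAct a '' S = S → qAct a⁻¹ '' S = S := by
      intro S h
      conv_lhs => rw [← h]
      rw [← Set.image_comp, ← show qAct (a⁻¹ * a) = qAct a⁻¹ ∘ qAct a from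
        funext (qAct_mul a⁻¹ a), inv_mul_cancel,
        show qAct (1 : Sp1 × GLH I) = id from funext qAct_one, Set.image_id]
    exact ⟨key _ ha.1, key _ ha.2⟩

/-- The central element `(-1, -1)` of `Sp(1) × GL(I,ℍ)`. -/
def negPair (I : Type) [Fintype I] [DecidableEq I] : Sp1 × GLH I :=
  (⟨-1, by simp [Sp1]⟩, -1)

/-- The diagonal `±1` subgroup of `Sp(1) × GL(I,ℍ)`. -/
def diagPM (I : Type) [Fintype I] [DecidableEq I] : Subgroup (Sp1 × GLH I) :=
  Subgroup.zpowers (negPair I)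

lemma negPair_commute {I : Type} [Fintype I] [DecidableEq I] (g : Sp1 × GLH I) :
    Commute g (negPair I) := by
  have h1 : Commute g.1 (negPair I).1 := by
    apply Subtype.ext
    show (g.1 : ℍ[ℝ]ˣ) * ((negPair I).1 : ℍ[ℝ]ˣ) = _ * _
    simp [negPair, mul_neg, neg_mul]
  have h2 : Commute g.2 (negPair I).2 := by
    show g.2 * (-1) = (-1) * g.2
    simp [mul_neg, neg_mul]
  exact Prod.ext h1 h2

instance diagPM_normal (I : Type) [Fintype I] [DecidableEq I] : (diagPM I).Normal := by
  constructor
  intro n hn g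
  obtain ⟨k, rfl⟩ := Subgroup.mem_zpowers_iff.mp hn
  have h : Commute g ((negPair I) ^ k) := ((negPair_commute g).zpow_right k)
  rw [h.eq, mul_inv_cancel_right]
  exact Subgroup.zpow_mem _ (Subgroup.mem_zpowers _) k

/-- `Sp(1)·GL(I,ℍ)`, the quotient of `Sp(1) × GL(I,ℍ)` by the diagonal `±1`. -/
abbrev SpGLH (I : Type) [Fintype I] [DecidableEq I] :=
  (Sp1 × GLH I) ⧸ diagPM I

/-- `GL(l,ℝ)`. -/
abbrev GLR (l : ℕ) := (Matrix (Fin l) (Fin l) ℝ)ˣ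

/-- The group `G_{l,m} = GL(l,ℝ) × (Sp(1)·GL(m,ℍ))`. -/
abbrev Glm (l m : ℕ) := GLR l × SpGLH (Fin m)

/-- The subset `ℝ^l ⊂ ℍ^{l+m}`: real entries in the first `l` coordinates,
zero in the last `m`. -/
def realSubset (l m : ℕ) : Set (Sum (Fin l) (Fin m) → ℍ[ℝ]) :=
  {v | (∀ i : Fin l, ∃ r : ℝ, v (Sum.inl i) = (r : ℍ[ℝ])) ∧
       (∀ j : Fin m, v (Sum.inr j) = 0)}

/-- The subset `(Im ℍ)^l × ℍ^m ⊂ ℍ^{l+m}`: imaginary quaternions in the first `l`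
coordinates. -/
def imSubset (l m : ℕ) : Set (Sum (Fin l) (Fin m) → ℍ[ℝ]) :=
  {v | ∀ i : Fin l, (v (Sum.inl i)).re = 0}


/-! ### Auxiliary material for the proof -/

namespace GlmAux

open Matrix

lemma re_sum {ι : Type*} (s : Finset ι) (f : ι → ℍ[ℝ]) :
    (∑ i ∈ s, f i).re = ∑ i ∈ s, (f i).re := by
  induction s using Finset.cons_induction with
  | empty => simp
  | cons a s ha ih => rw [Finset.sum_cons, Finset.sum_cons, Quaternion.re_add, ih]

lemma re_mul_comm (a b : ℍ[ℝ]) : (a * b).re = (b * a).re := by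
  simp [Quaternion.re_mul]; ring

lemma re_conj (u : ℍ[ℝ]ˣ) (x : ℍ[ℝ]) :
    (u.val * x * (u⁻¹).val).re = x.re := by
  rw [re_mul_comm, ← mul_assoc, Units.inv_mul, one_mul]

lemma re_mul_coe (x : ℍ[ℝ]) (r : ℝ) : (x * (r : ℍ[ℝ])).re = x.re * r := by
  simp [Quaternion.re_mul]

variable {I : Type} [Fintype I] [DecidableEq I]

lemma map_mul_smul (P : Matrix I I ℝ) (b : ℍ[ℝ]) (N : Matrix I I ℍ[ℝ]) :
    P.map (algebraMap ℝ ℍ[ℝ]) * (b • N) = b • (P.map (algebraMap ℝ ℍ[ℝ]) * N) := by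
  refine Matrix.ext fun i j => ?_
  simp only [Matrix.mul_apply, Matrix.smul_apply, smul_eq_mul, Finset.mul_sum]
  refine Finset.sum_congr rfl fun k _ => ?_
  rw [Matrix.map_apply, ← mul_assoc, Algebra.commutes, mul_assoc]

lemma smul_map_mul (a b : ℍ[ℝ]) (P Q : Matrix I I ℝ) :
    (a • P.map (algebraMap ℝ ℍ[ℝ])) * (b • Q.map (algebraMap ℝ ℍ[ℝ])) =
      (a * b) • (P * Q).map (algebraMap ℝ ℍ[ℝ]) := by
  rw [Matrix.smul_mul, map_mul_smul, smul_smul, Matrix.map_mul]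

lemma coe_sum {ι : Type*} (s : Finset ι) (f : ι → ℝ) :
    ((∑ i ∈ s, f i : ℝ) : ℍ[ℝ]) = ∑ i ∈ s, ((f i : ℝ) : ℍ[ℝ]) :=
  map_sum (algebraMap ℝ ℍ[ℝ]) f s

lemma sum_single_mul (k0 : I) (c : ℍ[ℝ]) (f : I → ℍ[ℝ]) :
    ∑ k, (Pi.single k0 c : I → ℍ[ℝ]) k * f k = c * f k0 := by
  rw [Finset.sum_eq_single k0]
  · simp
  · intro b _ hb; simp [Pi.single_apply, hb]
  · intro h; exact absurd (Finset.mem_univ k0) h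

lemma qAct_apply (g : Sp1 × GLH I) (v : I → ℍ[ℝ]) (i : I) :
    qAct g v i = g.1.val.val * ∑ k, v k * (g.2⁻¹).val k i := rfl

lemma image_eq_of_subsets (g : Sp1 × GLH I) (S : Set (I → ℍ[ℝ]))
    (h1 : qAct g '' S ⊆ S) (h2 : qAct g⁻¹ '' S ⊆ S) : qAct g '' S = S := by
  refine subset_antisymm h1 fun v hv => ?_
  refine ⟨qAct g⁻¹ v, h2 (Set.mem_image_of_mem _ hv), ?_⟩
  rw [← qAct_mul, mul_inv_cancel, qAct_one]

variable {l m : ℕ}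

/-- The block-diagonal unit `diag(a•P, C)` in `GL(l+m, ℍ)`. -/
def blockUnit (a : ℍ[ℝ]ˣ) (P : GLR l) (C : GLH (Fin m)) : GLH (Sum (Fin l) (Fin m)) where
  val := fromBlocks (a.val • (P.val.map (algebraMap ℝ ℍ[ℝ]))) 0 0 C.val
  inv := fromBlocks ((a⁻¹).val • ((P⁻¹).val.map (algebraMap ℝ ℍ[ℝ]))) 0 0 (C⁻¹).val
  val_inv := by
    rw [Matrix.fromBlocks_multiply, smul_map_mul]
    simp only [Matrix.mul_zero, Matrix.zero_mul, add_zero, zero_add, Units.mul_inv, one_smul]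
    rw [Matrix.map_one _ (map_zero _) (map_one _), Matrix.fromBlocks_one]
  inv_val := by
    rw [Matrix.fromBlocks_multiply, smul_map_mul]
    simp only [Matrix.mul_zero, Matrix.zero_mul, add_zero, zero_add, Units.inv_mul, one_smul]
    rw [Matrix.map_one _ (map_zero _) (map_one _), Matrix.fromBlocks_one]

lemma blockUnit_val (a : ℍ[ℝ]ˣ) (P : GLR l) (C : GLH (Fin m)) :
    (blockUnit a P C).val =
      fromBlocks (a.val • (P.val.map (algebraMap ℝ ℍ[ℝ]))) 0 0 C.val := rfl

lemma blockUnit_inv_val (a : ℍ[ℝ]ˣ) (P : GLR l) (C : GLH (Fin m)) :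
    ((blockUnit a P C)⁻¹).val =
      fromBlocks ((a⁻¹).val • ((P⁻¹).val.map (algebraMap ℝ ℍ[ℝ]))) 0 0 (C⁻¹).val := rfl

lemma blockUnit_mul (a b : ℍ[ℝ]ˣ) (P Q : GLR l) (C D : GLH (Fin m)) :
    blockUnit a P C * blockUnit b Q D = blockUnit (a * b) (P * Q) (C * D) := by
  apply Units.ext
  rw [Units.val_mul, blockUnit_val, blockUnit_val, blockUnit_val, Matrix.fromBlocks_multiply,
    smul_map_mul]
  simp [Units.val_mul]

/-- The homomorphism `GL(l,ℝ) × (Sp(1) × GL(m,ℍ)) →* Sp(1) × GL(l+m,ℍ)`. -/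
def phi (l m : ℕ) : GLR l × (Sp1 × GLH (Fin m)) →* Sp1 × GLH (Sum (Fin l) (Fin m)) where
  toFun x := (x.2.1, blockUnit x.2.1.val x.1 x.2.2)
  map_one' := by
    refine Prod.ext rfl ?_
    show blockUnit (1 : Sp1).val 1 1 = 1
    apply Units.ext
    rw [blockUnit_val]
    simp [Matrix.map_one]
    rw [Matrix.map_one Quaternion.coe (by simp) (by simp), Matrix.fromBlocks_one]
  map_mul' x y := by
    refine Prod.ext rfl ?_
    show blockUnit (x.2.1 * y.2.1 : Sp1).val (x.1 * y.1) (x.2.2 * y.2.2) =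
      blockUnit x.2.1.val x.1 x.2.2 * blockUnit y.2.1.val y.1 y.2.2
    rw [blockUnit_mul]
    rfl

lemma phi_fst (x : GLR l × (Sp1 × GLH (Fin m))) : (phi l m x).1 = x.2.1 := rfl

lemma phi_snd (x : GLR l × (Sp1 × GLH (Fin m))) :
    (phi l m x).2 = blockUnit x.2.1.val x.1 x.2.2 := rfl

lemma qAct_phi_inl (P : GLR l) (a : Sp1) (C : GLH (Fin m)) (v : Sum (Fin l) (Fin m) → ℍ[ℝ])
    (j : Fin l) :
    qAct (phi l m (P, (a, C))) v (Sum.inl j) =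
      ∑ i, a.val.val * v (Sum.inl i) * (a.val⁻¹).val *
        algebraMap ℝ ℍ[ℝ] ((P⁻¹).val i j) := by
  rw [qAct_apply, phi_fst, phi_snd, blockUnit_inv_val, Fintype.sum_sum_type]
  simp only [Matrix.fromBlocks_apply₁₁, Matrix.fromBlocks_apply₂₁, Matrix.zero_apply,
    Matrix.smul_apply, Matrix.map_apply, smul_eq_mul, mul_zero, Finset.sum_const_zero, add_zero,
    Finset.mul_sum, mul_assoc]

lemma qAct_phi_inr (P : GLR l) (a : Sp1) (C : GLH (Fin m)) (v : Sum (Fin l) (Fin m) → ℍ[ℝ])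
    (j : Fin m) :
    qAct (phi l m (P, (a, C))) v (Sum.inr j) =
      a.val.val * ∑ k, v (Sum.inr k) * (C⁻¹).val k j := by
  rw [qAct_apply, phi_fst, phi_snd, blockUnit_inv_val, Fintype.sum_sum_type]
  simp only [Matrix.fromBlocks_apply₁₂, Matrix.fromBlocks_apply₂₂, Matrix.zero_apply,
    mul_zero, Finset.sum_const_zero, zero_add]

lemma phi_real_subset (P : GLR l) (a : Sp1) (C : GLH (Fin m)) :
    qAct (phi l m (P, (a, C))) '' realSubset l m ⊆ realSubset l m := by
  rintro w ⟨v, ⟨hv1, hv2⟩, rfl⟩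
  choose r hr using hv1
  constructor
  · intro j
    refine ⟨∑ i, r i * (P⁻¹).val i j, ?_⟩
    rw [qAct_phi_inl, coe_sum]
    refine Finset.sum_congr rfl fun i _ => ?_
    have h : a.val.val * (r i : ℍ[ℝ]) * (a.val⁻¹).val = (r i : ℍ[ℝ]) := by
      rw [← Quaternion.coe_commutes, mul_assoc, Units.mul_inv, mul_one]
    rw [hr i, h, Quaternion.coe_mul]
    rfl
  · intro j
    rw [qAct_phi_inr]
    have h : ∀ k : Fin m, v (Sum.inr k) * (C⁻¹).val k j = 0 := fun k => by
      rw [hv2 k, zero_mul]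
    rw [Finset.sum_congr rfl fun k _ => h k]
    simp

lemma phi_im_subset (P : GLR l) (a : Sp1) (C : GLH (Fin m)) :
    qAct (phi l m (P, (a, C))) '' imSubset l m ⊆ imSubset l m := by
  rintro w ⟨v, hv, rfl⟩
  intro j
  rw [qAct_phi_inl, re_sum]
  refine Finset.sum_eq_zero fun i _ => ?_
  rw [show algebraMap ℝ ℍ[ℝ] ((P⁻¹).val i j) = (((P⁻¹).val i j : ℝ) : ℍ[ℝ]) from rfl,
    re_mul_coe, re_conj, hv i, zero_mul]

lemma phi_mem_stab (P : GLR l) (a : Sp1) (C : GLH (Fin m)) :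
    phi l m (P, (a, C)) ∈ stab (realSubset l m) (imSubset l m) := by
  have hinv : (phi l m (P, (a, C)))⁻¹ = phi l m (P⁻¹, (a⁻¹, C⁻¹)) := by
    rw [← map_inv]; rfl
  constructor
  · refine image_eq_of_subsets _ _ (phi_real_subset P a C) ?_
    rw [hinv]; exact phi_real_subset _ _ _
  · refine image_eq_of_subsets _ _ (phi_im_subset P a C) ?_
    rw [hinv]; exact phi_im_subset _ _ _

/-- Structure of elements of the stabilizer: the inverse matrix is block diagonal with
`a⁻¹ • (real matrix)` in the upper-left block. -/
lemma stab_struct (g : Sp1 × GLH (Sum (Fin l) (Fin m)))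
    (hg : g ∈ stab (realSubset l m) (imSubset l m)) :
    ∃ R : Matrix (Fin l) (Fin l) ℝ,
      (g.2⁻¹).val =
        fromBlocks ((g.1.val⁻¹).val • (R.map (algebraMap ℝ ℍ[ℝ]))) 0 0
          ((g.2⁻¹).val.toBlocks₂₂) := by
  set u : ℍ[ℝ]ˣ := g.1.val with hu
  set B : Matrix (Sum (Fin l) (Fin m)) (Sum (Fin l) (Fin m)) ℍ[ℝ] := (g.2⁻¹).val with hB
  have hreal : ∀ v ∈ realSubset l m, qAct g v ∈ realSubset l m := fun v hv =>
    hg.1 ▸ Set.mem_image_of_mem (qAct g) hv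
  have him : ∀ v ∈ imSubset l m, qAct g v ∈ imSubset l m := fun v hv =>
    hg.2 ▸ Set.mem_image_of_mem (qAct g) hv
  -- real basis vectors
  have hbasis : ∀ i0 : Fin l,
      qAct g (Pi.single (Sum.inl i0) (1 : ℍ[ℝ])) ∈ realSubset l m := by
    intro i0
    refine hreal _ ⟨fun i => ⟨if i = i0 then 1 else 0, ?_⟩, fun j => ?_⟩
    · by_cases h : i = i0 <;> simp [Pi.single_apply, h]
    · simp [Pi.single_apply]
  have hone : ∀ (i0 : Fin l) (x : Sum (Fin l) (Fin m)),
      qAct g (Pi.single (Sum.inl i0) (1 : ℍ[ℝ])) x = u.val * B (Sum.inl i0) x := by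
    intro i0 x
    rw [qAct_apply, sum_single_mul, one_mul]
  -- upper-right block vanishes
  have hB12 : ∀ (i : Fin l) (j : Fin m), B (Sum.inl i) (Sum.inr j) = 0 := by
    intro i j
    have h := (hbasis i).2 j
    rw [hone] at h
    exact (Units.mul_right_eq_zero u).mp h
  -- upper-left block entries are real after multiplication by u
  have hB11 : ∀ i j : Fin l, ∃ r : ℝ, u.val * B (Sum.inl i) (Sum.inl j) = (r : ℍ[ℝ]) := by
    intro i j
    obtain ⟨r, hr⟩ := (hbasis i).1 j
    rw [hone] at hr
    exact ⟨r, hr⟩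
  -- lower-left block vanishes
  have hB21 : ∀ (k : Fin m) (j : Fin l), B (Sum.inr k) (Sum.inl j) = 0 := by
    intro k j
    have hv : (Pi.single (Sum.inr k) ((u⁻¹).val * star (B (Sum.inr k) (Sum.inl j))) :
        Sum (Fin l) (Fin m) → ℍ[ℝ]) ∈ imSubset l m := by
      intro i; simp [Pi.single_apply]
    have h := (him _ hv) j
    rw [qAct_apply, sum_single_mul] at h
    rw [← hu, ← hB] at h
    rw [← mul_assoc, ← mul_assoc, Units.mul_inv, one_mul,
      Quaternion.star_mul_self, Quaternion.re_coe] at h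
    exact Quaternion.normSq_eq_zero.mp h
  refine ⟨fun i j => (u.val * B (Sum.inl i) (Sum.inl j)).re, ?_⟩
  refine Matrix.ext fun x y => ?_
  cases x with
  | inl i =>
    cases y with
    | inl j =>
      rw [Matrix.fromBlocks_apply₁₁, Matrix.smul_apply]
      show B (Sum.inl i) (Sum.inl j) = (u⁻¹).val • algebraMap ℝ ℍ[ℝ] ((u.val * B (Sum.inl i) (Sum.inl j)).re)
      rw [smul_eq_mul]
      obtain ⟨r, hr⟩ := hB11 i j
      rw [hr, Quaternion.re_coe,
        show algebraMap ℝ ℍ[ℝ] r = (r : ℍ[ℝ]) from rfl, ← hr, ← mul_assoc, Units.inv_mul,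
        one_mul]
    | inr j =>
      rw [Matrix.fromBlocks_apply₁₂, Matrix.zero_apply]
      exact hB12 i j
  | inr k =>
    cases y with
    | inl j =>
      rw [Matrix.fromBlocks_apply₂₁, Matrix.zero_apply]
      exact hB21 k j
    | inr j =>
      rw [Matrix.fromBlocks_apply₂₂]
      rfl

lemma negPair_mem_cases (I : Type) [Fintype I] [DecidableEq I] (x : Sp1 × GLH I)
    (hx : x ∈ diagPM I) : x = 1 ∨ x = negPair I := by
  obtain ⟨k, rfl⟩ := Subgroup.mem_zpowers_iff.mp hx
  have hsq : negPair I * negPair I = 1 := by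
    refine Prod.ext ?_ ?_
    · rw [Prod.fst_mul]
      exact Subtype.ext (by simp [negPair])
    · rw [Prod.snd_mul]
      show ((-1 : GLH I) * (-1) = 1)
      simp
  have key : ∀ n : ℕ, (negPair I) ^ n = 1 ∨ (negPair I) ^ n = negPair I := by
    intro n
    induction n with
    | zero => left; rfl
    | succ n ih =>
      rcases ih with h | h
      · right; rw [pow_succ, h, one_mul]
      · left; rw [pow_succ, h, hsq]
  have hinv : (negPair I)⁻¹ = negPair I := inv_eq_of_mul_eq_one_right hsq
  cases k with
  | ofNat n => rw [Int.ofNat_eq_coe, zpow_natCast]; exact key n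
  | negSucc n =>
    rw [zpow_negSucc]
    rcases key (n + 1) with h | h
    · left; rw [h, inv_one]
    · right; rw [h, hinv]

lemma neg_one_blocks (l m : ℕ) :
    (-1 : Matrix (Sum (Fin l) (Fin m)) (Sum (Fin l) (Fin m)) ℍ[ℝ]) =
      fromBlocks (-1 : Matrix (Fin l) (Fin l) ℍ[ℝ]) 0 0 (-1 : Matrix (Fin m) (Fin m) ℍ[ℝ]) := by
  rw [← Matrix.fromBlocks_one (l := Fin l) (m := Fin m) (α := ℍ[ℝ]), Matrix.fromBlocks_neg,
    neg_zero, neg_zero]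

lemma phi_negPair (l m : ℕ) :
    phi l m (1, negPair (Fin m)) = negPair (Sum (Fin l) (Fin m)) := by
  refine Prod.ext rfl ?_
  apply Units.ext
  have h1 : ((phi l m (1, negPair (Fin m))).2).val =
      fromBlocks ((-1 : ℍ[ℝ]ˣ).val • ((1 : GLR l).val.map (algebraMap ℝ ℍ[ℝ]))) 0 0
        (-1 : GLH (Fin m)).val := rfl
  rw [h1]
  show _ = (-1 : GLH (Sum (Fin l) (Fin m))).val
  simp only [Units.val_neg, Units.val_one]
  rw [Matrix.map_one _ (map_zero _) (map_one _), neg_one_smul, neg_one_blocks]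

/-- First part of the homomorphism `G_{l,m} → Sp(1)·GL(l+m,ℍ)`. -/
def psi1 (l m : ℕ) : GLR l →* SpGLH (Sum (Fin l) (Fin m)) :=
  (QuotientGroup.mk' (diagPM (Sum (Fin l) (Fin m)))).comp
    ((phi l m).comp (MonoidHom.inl (GLR l) (Sp1 × GLH (Fin m))))

/-- Second part, before descending to the quotient. -/
def psi2' (l m : ℕ) : (Sp1 × GLH (Fin m)) →* SpGLH (Sum (Fin l) (Fin m)) :=
  (QuotientGroup.mk' (diagPM (Sum (Fin l) (Fin m)))).comp
    ((phi l m).comp (MonoidHom.inr (GLR l) (Sp1 × GLH (Fin m))))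

lemma psi2'_diag (l m : ℕ) : ∀ x ∈ diagPM (Fin m), psi2' l m x = 1 := by
  intro x hx
  rcases negPair_mem_cases (Fin m) x hx with rfl | rfl
  · exact map_one _
  · show (QuotientGroup.mk' (diagPM (Sum (Fin l) (Fin m)))) (phi l m (1, negPair (Fin m))) = 1
    rw [phi_negPair]
    exact (QuotientGroup.eq_one_iff _).mpr (Subgroup.mem_zpowers _)

/-- Second part of the homomorphism. -/
def psi2 (l m : ℕ) : SpGLH (Fin m) →* SpGLH (Sum (Fin l) (Fin m)) :=
  QuotientGroup.lift (diagPM (Fin m)) (psi2' l m) (psi2'_diag l m)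

lemma psi_comm (l m : ℕ) (P : GLR l) (q : SpGLH (Fin m)) :
    Commute (psi1 (l := l) (m := m) P) (psi2 l m q) := by
  induction q using QuotientGroup.induction_on with | _ z =>
  have e1 : ((P, 1) : GLR l × (Sp1 × GLH (Fin m))) * (1, z) = (P, z) := by
    refine Prod.ext ?_ ?_ <;> simp
  have e2 : ((1, z) : GLR l × (Sp1 × GLH (Fin m))) * (P, 1) = (P, z) := by
    refine Prod.ext ?_ ?_ <;> simp
  show QuotientGroup.mk (phi l m (P, 1)) * QuotientGroup.mk (phi l m (1, z)) =
    QuotientGroup.mk (phi l m (1, z)) * QuotientGroup.mk (phi l m (P, 1))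
  rw [← QuotientGroup.mk_mul, ← QuotientGroup.mk_mul, ← _root_.map_mul, ← _root_.map_mul,
    e1, e2]

/-- The homomorphism `G_{l,m} →* Sp(1)·GL(l+m,ℍ)`. -/
def psi (l m : ℕ) : Glm l m →* SpGLH (Sum (Fin l) (Fin m)) :=
  MonoidHom.noncommCoprod (psi1 l m) (psi2 l m) (psi_comm l m)

lemma psi_mk (l m : ℕ) (P : GLR l) (z : Sp1 × GLH (Fin m)) :
    psi l m (P, (QuotientGroup.mk z : SpGLH (Fin m))) =
      QuotientGroup.mk (phi l m (P, z)) := by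
  have e1 : ((P, 1) : GLR l × (Sp1 × GLH (Fin m))) * (1, z) = (P, z) := by
    refine Prod.ext ?_ ?_ <;> simp
  have h0 : psi l m (P, (QuotientGroup.mk z : SpGLH (Fin m))) =
      psi1 (l := l) (m := m) P * psi2 l m (QuotientGroup.mk z) := rfl
  have ha : psi1 (l := l) (m := m) P = QuotientGroup.mk (phi l m (P, 1)) := rfl
  have hb : psi2 l m (QuotientGroup.mk z) = QuotientGroup.mk (phi l m (1, z)) := rfl
  rw [h0, ha, hb, ← QuotientGroup.mk_mul, ← _root_.map_mul, e1]

lemma fromBlocks_eq (A A' : Matrix (Fin l) (Fin l) ℍ[ℝ]) (D D' : Matrix (Fin m) (Fin m) ℍ[ℝ])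
    (B B' : Matrix (Fin l) (Fin m) ℍ[ℝ]) (C C' : Matrix (Fin m) (Fin l) ℍ[ℝ])
    (h : fromBlocks A B C D = fromBlocks A' B' C' D') : A = A' ∧ D = D' := by
  constructor
  · have := congrArg Matrix.toBlocks₁₁ h
    rwa [Matrix.toBlocks_fromBlocks₁₁, Matrix.toBlocks_fromBlocks₁₁] at this
  · have := congrArg Matrix.toBlocks₂₂ h
    rwa [Matrix.toBlocks_fromBlocks₂₂, Matrix.toBlocks_fromBlocks₂₂] at this

lemma map_eq_one {S : Matrix (Fin l) (Fin l) ℝ}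
    (h : S.map (algebraMap ℝ ℍ[ℝ]) = 1) : S = 1 := by
  rw [← Matrix.map_one (algebraMap ℝ ℍ[ℝ]) (map_zero _) (map_one _)] at h
  exact Matrix.map_injective (algebraMap ℝ ℍ[ℝ]).injective h

lemma psi_inj (l m : ℕ) : Function.Injective (psi l m) := by
  rw [injective_iff_map_eq_one]
  rintro ⟨P, q⟩ h
  induction q using QuotientGroup.induction_on with | _ z =>
  rw [psi_mk] at h
  have hz := (QuotientGroup.eq_one_iff _).mp h
  rcases negPair_mem_cases _ _ hz with h1 | h1
  · have hfst : z.1 = 1 := congrArg Prod.fst h1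
    have hsnd : blockUnit z.1.val P z.2 = 1 := congrArg Prod.snd h1
    have hval := congrArg Units.val hsnd
    rw [blockUnit_val, Units.val_one, ← Matrix.fromBlocks_one (l := Fin l) (m := Fin m)
      (α := ℍ[ℝ])] at hval
    obtain ⟨hA, hD⟩ := fromBlocks_eq _ _ _ _ _ _ _ _ hval
    rw [hfst, OneMemClass.coe_one, Units.val_one, one_smul] at hA
    have hP : P = 1 := Units.ext (map_eq_one hA)
    have hz2 : z.2 = 1 := Units.ext hD
    have hz1 : z = (1 : Sp1 × GLH (Fin m)) := Prod.ext hfst hz2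
    refine Prod.ext hP ?_
    show (QuotientGroup.mk z : SpGLH (Fin m)) = 1
    rw [hz1]
    exact (QuotientGroup.eq_one_iff _).mpr (one_mem _)
  · have hfst := congrArg Prod.fst h1
    have hsnd := congrArg Prod.snd h1
    have hval := congrArg Units.val hsnd
    have hcoe : z.1.val.val = (-1 : ℍ[ℝ]) := by
      have h' := congrArg (fun (t : Sp1) => t.val.val) hfst
      exact h'.trans (by show (-1 : ℍ[ℝ]ˣ).val = (-1 : ℍ[ℝ]); rw [Units.val_neg, Units.val_one])
    rw [show ((phi l m (P, z)).2).val = (blockUnit z.1.val P z.2).val from rfl,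
      blockUnit_val, hcoe] at hval
    have hneg : ((negPair (Sum (Fin l) (Fin m))).2).val =
        fromBlocks (-1 : Matrix (Fin l) (Fin l) ℍ[ℝ]) 0 0
          (-1 : Matrix (Fin m) (Fin m) ℍ[ℝ]) := by
      show (-1 : GLH (Sum (Fin l) (Fin m))).val = _
      rw [Units.val_neg, Units.val_one, neg_one_blocks]
    rw [hneg] at hval
    obtain ⟨hA, hD⟩ := fromBlocks_eq _ _ _ _ _ _ _ _ hval
    rw [neg_one_smul] at hA
    have hP : P = 1 := Units.ext (map_eq_one (neg_injective hA))
    have hz2 : z.2 = (-1 : GLH (Fin m)) := by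
      apply Units.ext
      rw [hD, Units.val_neg, Units.val_one]
    have hz1 : z = negPair (Fin m) := Prod.ext hfst hz2
    refine Prod.ext hP ?_
    show (QuotientGroup.mk z : SpGLH (Fin m)) = 1
    rw [hz1]
    exact (QuotientGroup.eq_one_iff _).mpr (Subgroup.mem_zpowers _)

lemma psi_range (l m : ℕ) :
    (psi l m).range = (stab (realSubset l m) (imSubset l m)).map
      (QuotientGroup.mk' (diagPM (Sum (Fin l) (Fin m)))) := by
  apply le_antisymm
  · rintro x ⟨⟨P, q⟩, rfl⟩
    induction q using QuotientGroup.induction_on with | _ z =>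
    rw [psi_mk]
    exact ⟨phi l m (P, z), phi_mem_stab P z.1 z.2, rfl⟩
  · rintro x ⟨g, hg, rfl⟩
    obtain ⟨R, hR⟩ := stab_struct g hg
    obtain ⟨R', hR'⟩ := stab_struct g⁻¹ ((stab (realSubset l m) (imSubset l m)).inv_mem hg)
    rw [show (g⁻¹).2 = g.2⁻¹ from rfl, show (g⁻¹).1 = g.1⁻¹ from rfl, inv_inv,
      show (g.1⁻¹).val = g.1.val⁻¹ from rfl, inv_inv] at hR'
    have hBB' : (g.2⁻¹).val * (g.2).val = 1 := by
      rw [← Units.val_mul, inv_mul_cancel, Units.val_one]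
    have hB'B : (g.2).val * (g.2⁻¹).val = 1 := by
      rw [← Units.val_mul, mul_inv_cancel, Units.val_one]
    rw [hR, hR', Matrix.fromBlocks_multiply] at hBB' hB'B
    simp only [Matrix.mul_zero, Matrix.zero_mul, add_zero, zero_add] at hBB' hB'B
    rw [smul_map_mul, Units.inv_mul, one_smul,
      ← Matrix.fromBlocks_one (l := Fin l) (m := Fin m) (α := ℍ[ℝ])] at hBB'
    rw [smul_map_mul, Units.mul_inv, one_smul,
      ← Matrix.fromBlocks_one (l := Fin l) (m := Fin m) (α := ℍ[ℝ])] at hB'B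
    obtain ⟨hA1, hD1⟩ := fromBlocks_eq _ _ _ _ _ _ _ _ hBB'
    obtain ⟨hA2, hD2⟩ := fromBlocks_eq _ _ _ _ _ _ _ _ hB'B
    have hRR' : R * R' = 1 := map_eq_one hA1
    have hR'R : R' * R = 1 := map_eq_one hA2
    set Pu : GLR l := ⟨R', R, hR'R, hRR'⟩ with hPu
    set Cu : GLH (Fin m) := ⟨(g.2).val.toBlocks₂₂, (g.2⁻¹).val.toBlocks₂₂, hD2, hD1⟩ with hCu
    have hg_eq : g = phi l m (Pu, (g.1, Cu)) := by
      refine Prod.ext rfl ?_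
      apply Units.ext
      rw [phi_snd, blockUnit_val]
      exact hR'
    exact ⟨(Pu, QuotientGroup.mk (g.1, Cu)), by rw [psi_mk, ← hg_eq]; rfl⟩

end GlmAux

/-- The group `G_{l,m} = GL(l,ℝ) × (Sp(1)·GL(m,ℍ))` is isomorphic
to the group of quaternionic linear isomorphisms of `ℍ^{l+m}` (i.e. elements of
`Sp(1)·GL(l+m,ℍ)`, acting by `q ↦ a q A⁻¹`) that preserve both `ℝ^l` and
`(Im ℍ)^l × ℍ^m`. -/
theorem Glm_iso_stabilizer (l m : ℕ) :
    Nonempty (Glm l m ≃*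
      ((stab (realSubset l m) (imSubset l m)).map
        (QuotientGroup.mk' (diagPM (Sum (Fin l) (Fin m)))))) := by
  exact ⟨(MonoidHom.ofInjective (GlmAux.psi_inj l m)).trans
    (MulEquiv.subgroupCongr (GlmAux.psi_range l m))⟩

end
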